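/- Let p, q be unit quaternions, α, β imaginary quaternions, Λ ∈ (0, π/2), and set Z = (pα, qβ). (i) If PZ = cos(2Λ + 2π/3) Z + sin(2Λ + 2π/3) JZ, then β = ½(1 − √3 cot Λ) α. (ii) If PZ = cos(−2Λ + 2π/3) Z + sin(−2Λ + 2π/3) JZ, then β = ½(1 + √3 cot Λ) α. -/

import Mathlib

noncomputable section

open Quaternion

/-- Euclidean inner product on the quaternions: `⟨x,y⟩ = Re (x * star y)`. -/
def ipQ (x y : ℍ[ℝ]) : ℝ := (x * star y).re

/-- Euclidean inner product on pairs of quaternions. -/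
def ip2Q (Z W : ℍ[ℝ] × ℍ[ℝ]) : ℝ := ipQ Z.1 W.1 + ipQ Z.2 W.2

/-- The almost complex structure `J` of the nearly Kähler `S³ × S³` at `(p,q)`:
`J(U,V) = (1/√3)(2pq⁻¹V − U, −2qp⁻¹U + V)`. -/
def Jmap (p q : ℍ[ℝ]) (Z : ℍ[ℝ] × ℍ[ℝ]) : ℍ[ℝ] × ℍ[ℝ] :=
  ((Real.sqrt 3)⁻¹ • ((2 : ℝ) • (p * q⁻¹ * Z.2) - Z.1),
   (Real.sqrt 3)⁻¹ • (-((2 : ℝ) • (q * p⁻¹ * Z.1)) + Z.2))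

/-- The nearly Kähler metric `g(Z,Z') = ½(⟨Z,Z'⟩ + ⟨JZ,JZ'⟩)`. -/
def gmet (p q : ℍ[ℝ]) (Z W : ℍ[ℝ] × ℍ[ℝ]) : ℝ :=
  (1 / 2) * (ip2Q Z W + ip2Q (Jmap p q Z) (Jmap p q W))

/-- The almost product structure `P(U,V) = (pq⁻¹V, qp⁻¹U)`. -/
def Pmap (p q : ℍ[ℝ]) (Z : ℍ[ℝ] × ℍ[ℝ]) : ℍ[ℝ] × ℍ[ℝ] :=
  (p * q⁻¹ * Z.2, q * p⁻¹ * Z.1)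

/-- The usual product structure `Q(U,V) = (−U, V)`. -/
def Qmap (Z : ℍ[ℝ] × ℍ[ℝ]) : ℍ[ℝ] × ℍ[ℝ] := (-Z.1, Z.2)

/-- Cross product of (imaginary) quaternions: `α × β = ½(αβ − βα)`. -/
def crossQ (a b : ℍ[ℝ]) : ℍ[ℝ] := (1 / 2 : ℝ) • (a * b - b * a)

/-- The tensor `G = ∇̃J` at `(p,q)`, evaluated on tangent vectors `X = (pα, qβ)`,
`Y = (pγ, qδ)` (so `α = p⁻¹X₁`, etc.):
`G(X,Y) = (2/(3√3))(p(β×γ + α×δ + α×γ − 2β×δ), q(−α×δ − β×γ + 2α×γ − β×δ))`. -/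
def Gmap (p q : ℍ[ℝ]) (X Y : ℍ[ℝ] × ℍ[ℝ]) : ℍ[ℝ] × ℍ[ℝ] :=
  (2 / (3 * Real.sqrt 3) : ℝ) •
    ((p * (crossQ (q⁻¹ * X.2) (p⁻¹ * Y.1) + crossQ (p⁻¹ * X.1) (q⁻¹ * Y.2)
        + crossQ (p⁻¹ * X.1) (p⁻¹ * Y.1) - (2 : ℝ) • crossQ (q⁻¹ * X.2) (q⁻¹ * Y.2)),
      q * (-(crossQ (p⁻¹ * X.1) (q⁻¹ * Y.2)) - crossQ (q⁻¹ * X.2) (p⁻¹ * Y.1)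
        + (2 : ℝ) • crossQ (p⁻¹ * X.1) (p⁻¹ * Y.1) - crossQ (q⁻¹ * X.2) (q⁻¹ * Y.2))))

/-- for `Z = (pα, qβ)` a `P`-eigendirection with angle `±Λ + π/3`,
the second component is determined: `β = ½(1 ∓ √3 cot Λ)α`. -/
lemma key (q p : ℍ[ℝ]) (hq : q ≠ 0) (hp : p ≠ 0) (α β : ℍ[ℝ]) (c s : ℝ)
    (h : q * p⁻¹ * (p * α) = c • (q * β)
      + s • ((Real.sqrt 3)⁻¹ • (-((2:ℝ) • (q * p⁻¹ * (p * α))) + q * β))) :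
    (c + s * (Real.sqrt 3)⁻¹) • β = (1 + 2 * (s * (Real.sqrt 3)⁻¹)) • α := by
  have hpa : q * p⁻¹ * (p * α) = q * α := by
    rw [mul_assoc, ← mul_assoc p⁻¹, inv_mul_cancel₀ hp, one_mul]
  rw [hpa] at h
  have h2 : q * α = q * (c • β + s • ((Real.sqrt 3)⁻¹ • (-((2:ℝ) • α) + β))) := by
    rw [h]; simp [mul_smul_comm, mul_add, mul_neg]
  have h3 := mul_left_cancel₀ hq h2
  linear_combination (norm := module) (-1 : ℝ) • h3

lemma twopith : (2*Real.pi/3) = Real.pi - Real.pi/3 := by ring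

lemma trigk1 (Λ : ℝ) :
    Real.cos (2*Λ + 2*Real.pi/3) + Real.sin (2*Λ + 2*Real.pi/3) * (Real.sqrt 3)⁻¹
      = -(4 / Real.sqrt 3) * (Real.sin Λ * Real.cos Λ) := by
  have s3sq : Real.sqrt 3 * Real.sqrt 3 = 3 := Real.mul_self_sqrt (by norm_num)
  have s3ne : Real.sqrt 3 ≠ 0 := by positivity
  rw [Real.cos_add, Real.sin_add, twopith, Real.cos_pi_sub, Real.sin_pi_sub,
    Real.cos_pi_div_three, Real.sin_pi_div_three, Real.sin_two_mul, Real.cos_two_mul]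
  have h3 : Real.sqrt 3 ^ 3 = 3 * Real.sqrt 3 := by
    rw [pow_succ, sq, s3sq]
  field_simp
  ring_nf
  linear_combination (-(2:ℝ)*Real.cos Λ*Real.sin Λ) * s3sq

lemma trigm1 (Λ : ℝ) (hs : Real.sin Λ ≠ 0) :
    1 + 2 * (Real.sin (2*Λ + 2*Real.pi/3) * (Real.sqrt 3)⁻¹)
      = (-(4 / Real.sqrt 3) * (Real.sin Λ * Real.cos Λ))
        * ((1 - Real.sqrt 3 * (Real.cos Λ / Real.sin Λ)) / 2) := by
  have s3sq : Real.sqrt 3 * Real.sqrt 3 = 3 := Real.mul_self_sqrt (by norm_num)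
  have s3ne : Real.sqrt 3 ≠ 0 := by positivity
  rw [Real.sin_add, twopith, Real.cos_pi_sub, Real.sin_pi_sub,
    Real.cos_pi_div_three, Real.sin_pi_div_three, Real.sin_two_mul, Real.cos_two_mul]
  have h3 : Real.sqrt 3 ^ 3 = 3 * Real.sqrt 3 := by
    rw [pow_succ, sq, s3sq]
  field_simp
  ring_nf
  try linear_combination ((4:ℝ)*Real.cos Λ*Real.sin Λ) * h3

lemma trigk2 (Λ : ℝ) :
    Real.cos (-(2*Λ) + 2*Real.pi/3) + Real.sin (-(2*Λ) + 2*Real.pi/3) * (Real.sqrt 3)⁻¹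
      = (4 / Real.sqrt 3) * (Real.sin Λ * Real.cos Λ) := by
  have s3sq : Real.sqrt 3 * Real.sqrt 3 = 3 := Real.mul_self_sqrt (by norm_num)
  have s3ne : Real.sqrt 3 ≠ 0 := by positivity
  rw [Real.cos_add, Real.sin_add, twopith, Real.cos_pi_sub, Real.sin_pi_sub,
    Real.cos_pi_div_three, Real.sin_pi_div_three, Real.cos_neg, Real.sin_neg,
    Real.sin_two_mul, Real.cos_two_mul]
  have h3 : Real.sqrt 3 ^ 3 = 3 * Real.sqrt 3 := by
    rw [pow_succ, sq, s3sq]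
  field_simp
  ring_nf
  linear_combination ((2:ℝ)*Real.cos Λ*Real.sin Λ) * s3sq

lemma trigm2 (Λ : ℝ) (hs : Real.sin Λ ≠ 0) :
    1 + 2 * (Real.sin (-(2*Λ) + 2*Real.pi/3) * (Real.sqrt 3)⁻¹)
      = ((4 / Real.sqrt 3) * (Real.sin Λ * Real.cos Λ))
        * ((1 + Real.sqrt 3 * (Real.cos Λ / Real.sin Λ)) / 2) := by
  have s3sq : Real.sqrt 3 * Real.sqrt 3 = 3 := Real.mul_self_sqrt (by norm_num)
  have s3ne : Real.sqrt 3 ≠ 0 := by positivity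
  rw [Real.sin_add, twopith, Real.cos_pi_sub, Real.sin_pi_sub,
    Real.cos_pi_div_three, Real.sin_pi_div_three, Real.cos_neg, Real.sin_neg,
    Real.sin_two_mul, Real.cos_two_mul]
  have h3 : Real.sqrt 3 ^ 3 = 3 * Real.sqrt 3 := by
    rw [pow_succ, sq, s3sq]
  field_simp
  ring_nf
  try linear_combination ((4:ℝ)*Real.cos Λ*Real.sin Λ) * h3

lemma fin (α β : ℍ[ℝ]) (k m t : ℝ) (hk : k ≠ 0) (h : k • β = m • α) (ht : m = k * t) :
    β = t • α := by
  have h2 : β = k⁻¹ • (k • β) := by rw [smul_smul, inv_mul_cancel₀ hk, one_smul]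
  rw [h2, h, ht, smul_smul, ← mul_assoc, inv_mul_cancel₀ hk, one_mul]

theorem stmt8 (p q : ℍ[ℝ]) (hp : ‖p‖ = 1) (hq : ‖q‖ = 1)
    (α β : ℍ[ℝ]) (hα : α.re = 0) (hβ : β.re = 0)
    (Λ : ℝ) (hΛ : Λ ∈ Set.Ioo 0 (Real.pi / 2))
    (Z : ℍ[ℝ] × ℍ[ℝ]) (hZ : Z = (p * α, q * β)) :
    (Pmap p q Z =
        Real.cos (2 * Λ + 2 * Real.pi / 3) • Z
          + Real.sin (2 * Λ + 2 * Real.pi / 3) • Jmap p q Z →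
      β = ((1 - Real.sqrt 3 * (Real.cos Λ / Real.sin Λ)) / 2 : ℝ) • α) ∧
    (Pmap p q Z =
        Real.cos (-(2 * Λ) + 2 * Real.pi / 3) • Z
          + Real.sin (-(2 * Λ) + 2 * Real.pi / 3) • Jmap p q Z →
      β = ((1 + Real.sqrt 3 * (Real.cos Λ / Real.sin Λ)) / 2 : ℝ) • α) := by
  obtain ⟨hΛ0, hΛ1⟩ := hΛ
  have hp0 : p ≠ 0 := by intro h; simp [h] at hp
  have hq0 : q ≠ 0 := by intro h; simp [h] at hq
  have hsin : 0 < Real.sin Λ := Real.sin_pos_of_pos_of_lt_pi hΛ0 (by linarith [Real.pi_pos])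
  have hcos : 0 < Real.cos Λ := Real.cos_pos_of_mem_Ioo ⟨by linarith, hΛ1⟩
  have s3pos : (0:ℝ) < Real.sqrt 3 := by positivity
  subst hZ
  constructor <;> intro h <;>
    [ (have h2 := congrArg Prod.snd h);
      (have h2 := congrArg Prod.snd h) ]
  · simp only [Pmap, Jmap, Prod.snd_add, Prod.smul_snd] at h2
    have h5 := key q p hq0 hp0 α β _ _ h2
    refine fin α β _ _ _ ?_ h5 ?_
    · rw [trigk1]
      have hpos : 0 < 4 / Real.sqrt 3 * (Real.sin Λ * Real.cos Λ) := by positivity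
      exact ne_of_lt (by linarith)
    · rw [trigk1, trigm1 Λ (ne_of_gt hsin)]
  · simp only [Pmap, Jmap, Prod.snd_add, Prod.smul_snd] at h2
    have h5 := key q p hq0 hp0 α β _ _ h2
    refine fin α β _ _ _ ?_ h5 ?_
    · rw [trigk2]; positivity
    · rw [trigk2, trigm2 Λ (ne_of_gt hsin)]
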